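/- For the symmetric group S_n (n ≥ 1) equipped with the Hamming distance d_H(σ,σ') = |{i : σ(i) ≠ σ'(i)}| and the uniform measure, the subgaussian constant satisfies σ²_{S_n} ≤ n − 1. -/

import Mathlib

open Finset

/-- Expectation of `f` under the uniform measure on a finite type. -/
noncomputable def unifE {α : Type*} [Fintype α] (f : α → ℝ) : ℝ :=
  (∑ x, f x) / (Fintype.card α)

/-- `f` is 1-Lipschitz with respect to the (ℕ-valued) distance `d`. -/
def IsLip {α : Type*} (d : α → α → ℕ) (f : α → ℝ) : Prop :=
  ∀ x y, |f x - f y| ≤ d x y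

/-- `c` is a subgaussian constant for `f` under the uniform measure. -/
def IsSubgConst {α : Type*} [Fintype α] (f : α → ℝ) (c : ℝ) : Prop :=
  ∀ t : ℝ, unifE (fun x => Real.exp (t * (f x - unifE f))) ≤ Real.exp (c * t ^ 2 / 2)

/-- The subgaussian constant of a finite metric space. -/
noncomputable def sgConst {α : Type*} [Fintype α] (d : α → α → ℕ) : ℝ :=
  sSup {s | ∃ f : α → ℝ, IsLip d f ∧ s = sInf {c | IsSubgConst f c}}

/-- Hamming distance on permutations of `Fin n`. -/
def permHammingDist {n : ℕ} (σ τ : Equiv.Perm (Fin n)) : ℕ :=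
  (Finset.univ.filter fun i => σ i ≠ τ i).card

lemma key_ineq (p : ℝ) (hp0 : 0 ≤ p) (hp1 : p ≤ 1) (u : ℝ) :
    (1 - p) + p * Real.exp u ≤ Real.exp (p * u + u ^ 2 / 8) := by
  set D : ℝ → ℝ := fun u => (1 - p) + p * Real.exp u with hDdef
  have hD : ∀ v : ℝ, 0 < D v := by
    intro v
    rcases eq_or_lt_of_le hp0 with h | h
    · simp [hDdef, ← h]
    · have := Real.exp_pos v
      have : 0 < p * Real.exp v := by positivity
      simp only [hDdef]; nlinarith
  set h' : ℝ → ℝ := fun u => p + u / 4 - p * Real.exp u / D u with hh'def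
  set h : ℝ → ℝ := fun u => p * u + u ^ 2 / 8 - Real.log (D u) with hhdef
  have dD : ∀ v : ℝ, HasDerivAt D (p * Real.exp v) v := by
    intro v
    exact ((Real.hasDerivAt_exp v).const_mul p).const_add (1 - p)
  have dh : ∀ v : ℝ, HasDerivAt h (h' v) v := by
    intro v
    have d1 : HasDerivAt (fun u : ℝ => p * u) p v := by
      simpa using (hasDerivAt_id v).const_mul p
    have d2 : HasDerivAt (fun u : ℝ => u ^ 2 / 8) (v / 4) v := by
      have := (hasDerivAt_pow 2 v).div_const 8
      exact this.congr_deriv (by rw [show (2:ℕ) - 1 = 1 from rfl]; push_cast; ring)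
    have d3 : HasDerivAt (fun u => Real.log (D u)) (p * Real.exp v / D v) v :=
      (dD v).log (ne_of_gt (hD v))
    exact (d1.add d2).sub d3
  have dh' : ∀ v : ℝ, HasDerivAt h'
      (1 / 4 - (p * Real.exp v * D v - p * Real.exp v * (p * Real.exp v)) / (D v) ^ 2) v := by
    intro v
    have dA : HasDerivAt (fun u : ℝ => p * Real.exp u) (p * Real.exp v) v :=
      (Real.hasDerivAt_exp v).const_mul p
    have dQ : HasDerivAt (fun u => p * Real.exp u / D u)
        ((p * Real.exp v * D v - p * Real.exp v * (p * Real.exp v)) / (D v) ^ 2) v :=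
      dA.div (dD v) (ne_of_gt (hD v))
    have d1 : HasDerivAt (fun u : ℝ => p + u / 4) (1 / 4) v := by
      simpa using ((hasDerivAt_id v).div_const 4).const_add p
    exact d1.sub dQ
  have h''nonneg : ∀ v : ℝ, 0 ≤ 1 / 4 -
      (p * Real.exp v * D v - p * Real.exp v * (p * Real.exp v)) / (D v) ^ 2 := by
    intro v
    have hDv := hD v
    have heq : 1 / 4 - (p * Real.exp v * D v - p * Real.exp v * (p * Real.exp v)) / (D v) ^ 2
        = (D v / 2 - p * Real.exp v) ^ 2 / (D v) ^ 2 := by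
      field_simp
      ring
    rw [heq]; positivity
  have mono_h' : Monotone h' :=
    monotone_of_deriv_nonneg (fun v => (dh' v).differentiableAt)
      (fun v => by rw [(dh' v).deriv]; exact h''nonneg v)
  have h'0 : h' 0 = 0 := by
    simp only [hh'def, hDdef, Real.exp_zero, mul_one]
    have : (1 - p) + p = 1 := by ring
    rw [this]
    simp
  have h0 : h 0 = 0 := by
    simp only [hhdef, hDdef, Real.exp_zero, mul_one, mul_zero]
    have : (1 - p) + p = 1 := by ring
    rw [this]
    simp
  have hcont : Continuous h := by
    have : Differentiable ℝ h := fun v => (dh v).differentiableAt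
    exact this.continuous
  have hnonneg : 0 ≤ h u := by
    rcases le_total 0 u with hu | hu
    · have mono : MonotoneOn h (Set.Ici 0) := by
        apply monotoneOn_of_deriv_nonneg (convex_Ici 0) hcont.continuousOn
          (fun v _ => (dh v).differentiableAt.differentiableWithinAt)
        intro v hv
        rw [(dh v).deriv]
        rw [interior_Ici] at hv
        have : h' 0 ≤ h' v := mono_h' (le_of_lt hv)
        linarith [h'0 ▸ this]
      have := mono (Set.self_mem_Ici) (Set.mem_Ici.mpr hu) hu
      linarith [h0 ▸ this]
    · have anti : AntitoneOn h (Set.Iic 0) := by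
        apply antitoneOn_of_deriv_nonpos (convex_Iic 0) hcont.continuousOn
          (fun v _ => (dh v).differentiableAt.differentiableWithinAt)
        intro v hv
        rw [(dh v).deriv]
        rw [interior_Iic] at hv
        have : h' v ≤ h' 0 := mono_h' (le_of_lt hv)
        linarith [h'0 ▸ this]
      have := anti (Set.mem_Iic.mpr hu) (Set.self_mem_Iic) hu
      linarith [h0 ▸ this]
  have hlog : Real.log (D u) ≤ p * u + u ^ 2 / 8 := by
    simp only [hhdef] at hnonneg; linarith
  calc D u = Real.exp (Real.log (D u)) := (Real.exp_log (hD u)).symm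
    _ ≤ Real.exp (p * u + u ^ 2 / 8) := Real.exp_le_exp.mpr hlog

lemma hoeffding_unif {ι : Type*} [Fintype ι] [Nonempty ι] (g : ι → ℝ) (r : ℝ)
    (hr : ∀ i j, |g i - g j| ≤ r) : IsSubgConst g (r ^ 2 / 4) := by
  intro t
  have hN : (0 : ℝ) < Fintype.card ι := by
    exact_mod_cast Fintype.card_pos
  set N : ℝ := (Fintype.card ι : ℝ) with hNdef
  set m : ℝ := unifE g with hm
  set a : ℝ := univ.inf' univ_nonempty g with ha
  set b : ℝ := univ.sup' univ_nonempty g with hb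
  have hag : ∀ i, a ≤ g i := fun i => inf'_le g (mem_univ i)
  have hgb : ∀ i, g i ≤ b := fun i => le_sup' g (mem_univ i)
  have hab : a ≤ b := le_trans (hag (Classical.arbitrary ι)) (hgb _)
  have hba_r : b - a ≤ r := by
    obtain ⟨i, -, hi⟩ := exists_mem_eq_sup' univ_nonempty g
    obtain ⟨j, -, hj⟩ := exists_mem_eq_inf' univ_nonempty g
    calc b - a = g i - g j := by rw [hb, ha, hi, hj]
      _ ≤ |g i - g j| := le_abs_self _
      _ ≤ r := hr i j
  have hr0 : 0 ≤ r := le_trans (abs_nonneg _) (hr (Classical.arbitrary ι) (Classical.arbitrary ι))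
  have ham : a ≤ m := by
    rw [hm]
    unfold unifE
    rw [le_div_iff₀ hN]
    calc a * N = ∑ _i : ι, a := by simp [hNdef, mul_comm]
      _ ≤ ∑ i, g i := Finset.sum_le_sum fun i _ => hag i
  have hmb : m ≤ b := by
    rw [hm]
    unfold unifE
    rw [div_le_iff₀ hN]
    calc (∑ i, g i) ≤ ∑ _i : ι, b := Finset.sum_le_sum fun i _ => hgb i
      _ = b * N := by simp [hNdef, mul_comm]
  have hsum0 : ∑ i, (g i - m) = 0 := by
    rw [Finset.sum_sub_distrib]
    simp only [Finset.sum_const, Finset.card_univ, nsmul_eq_mul]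
    rw [hm]
    unfold unifE
    field_simp
    ring
  rcases eq_or_lt_of_le hab with heq | hlt
  · -- a = b : g constant, g i = m
    have hgm : ∀ i, g i = m := by
      intro i
      have h1 : ∀ j, g j = a := fun j => le_antisymm (heq ▸ hgb j) (hag j)
      have h2 : m = a := by
        rw [hm]; unfold unifE
        rw [div_eq_iff (ne_of_gt hN)]
        calc (∑ j, g j) = ∑ _j : ι, a := Finset.sum_congr rfl fun j _ => h1 j
          _ = a * N := by simp [hNdef, mul_comm]
      rw [h1 i, h2]
    have : (fun x => Real.exp (t * (g x - m))) = fun _ => 1 := by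
      funext x; rw [hgm x]; simp
    rw [show unifE g = m from rfl] at *
    rw [this]
    unfold unifE
    simp only [Finset.sum_const, Finset.card_univ, nsmul_eq_mul, mul_one]
    rw [div_self (ne_of_gt hN)]
    apply Real.one_le_exp
    positivity
  · -- a < b
    set w : ℝ := b - a with hw
    have hw0 : 0 < w := by simp [hw]; linarith
    set p : ℝ := (m - a) / w with hp
    have hp0 : 0 ≤ p := by apply div_nonneg <;> linarith
    have hp1 : p ≤ 1 := by rw [div_le_one hw0]; linarith
    -- convexity bound: exp(t*(g i - m)) ≤ ((b - g i) * exp(t*(a-m)) + (g i - a) * exp(t*(b-m)))/w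
    have conv : ∀ i, Real.exp (t * (g i - m)) ≤
        ((b - g i) / w) * Real.exp (t * (a - m)) + ((g i - a) / w) * Real.exp (t * (b - m)) := by
      intro i
      have hl : (0:ℝ) ≤ (b - g i) / w := by apply div_nonneg <;> linarith [hgb i]
      have hmu : (0:ℝ) ≤ (g i - a) / w := by apply div_nonneg <;> linarith [hag i]
      have hsum : (b - g i) / w + (g i - a) / w = 1 := by
        field_simp
        rw [hw]; ring
      have := convexOn_exp.2 (Set.mem_univ (t * (a - m))) (Set.mem_univ (t * (b - m))) hl hmu hsum
      simp only [smul_eq_mul] at this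
      have harg : (b - g i) / w * (t * (a - m)) + (g i - a) / w * (t * (b - m)) = t * (g i - m) := by
        field_simp
        ring
      rw [harg] at this
      exact this
    have sum_le : ∑ i, Real.exp (t * (g i - m)) ≤
        N * (((b - m) * Real.exp (t * (a - m)) - (a - m) * Real.exp (t * (b - m))) / w) := by
      calc ∑ i, Real.exp (t * (g i - m))
          ≤ ∑ i, (((b - g i) / w) * Real.exp (t * (a - m)) + ((g i - a) / w) * Real.exp (t * (b - m))) :=
            Finset.sum_le_sum fun i _ => conv i
        _ = ((N * b - N * m) / w) * Real.exp (t * (a - m)) + ((N * m - N * a) / w) * Real.exp (t * (b - m)) := by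
            rw [Finset.sum_add_distrib, ← Finset.sum_mul, ← Finset.sum_mul]
            have e1 : ∑ i, (b - g i) / w = (N * b - N * m) / w := by
              rw [← Finset.sum_div]
              congr 1
              have h3 : ∑ i, (b - g i) = (∑ _i : ι, (b - m)) - ∑ i, (g i - m) := by
                rw [← Finset.sum_sub_distrib]; apply Finset.sum_congr rfl; intros; ring
              rw [h3, hsum0, sub_zero, Finset.sum_const, Finset.card_univ, nsmul_eq_mul, ← hNdef]
              ring
            have e2 : ∑ i, (g i - a) / w = (N * m - N * a) / w := by
              rw [← Finset.sum_div]
              congr 1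
              have h3 : ∑ i, (g i - a) = (∑ i, (g i - m)) + ∑ _i : ι, (m - a) := by
                rw [← Finset.sum_add_distrib]; apply Finset.sum_congr rfl; intros; ring
              rw [h3, hsum0, zero_add, Finset.sum_const, Finset.card_univ, nsmul_eq_mul, ← hNdef]
              ring
            rw [e1, e2]
        _ = N * (((b - m) * Real.exp (t * (a - m)) - (a - m) * Real.exp (t * (b - m))) / w) := by
            field_simp
            ring
    -- identify with key_ineq
    have hkey : ((b - m) * Real.exp (t * (a - m)) - (a - m) * Real.exp (t * (b - m))) / w
        ≤ Real.exp (t ^ 2 * w ^ 2 / 8) := by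
      have hid : ((b - m) * Real.exp (t * (a - m)) - (a - m) * Real.exp (t * (b - m))) / w
          = Real.exp (t * (a - m)) * ((1 - p) + p * Real.exp (t * w)) := by
        have hE : Real.exp (t * (b - m)) = Real.exp (t * (a - m)) * Real.exp (t * (b - a)) := by
          rw [← Real.exp_add]; congr 1; ring
        rw [hp, hw, hE]
        field_simp
        ring
      rw [hid]
      calc Real.exp (t * (a - m)) * ((1 - p) + p * Real.exp (t * w))
          ≤ Real.exp (t * (a - m)) * Real.exp (p * (t * w) + (t * w) ^ 2 / 8) := by
            apply mul_le_mul_of_nonneg_left (key_ineq p hp0 hp1 (t * w)) (le_of_lt (Real.exp_pos _))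
        _ = Real.exp (t * (a - m) + p * (t * w) + (t * w) ^ 2 / 8) := by
            rw [← Real.exp_add]; ring_nf
        _ = Real.exp (t ^ 2 * w ^ 2 / 8) := by
            congr 1
            have : t * (a - m) + p * (t * w) = 0 := by
              rw [hp]; field_simp; ring
            rw [show t * (a - m) + p * (t * w) + (t * w) ^ 2 / 8
                = (t * (a - m) + p * (t * w)) + (t * w) ^ 2 / 8 by ring, this]
            ring
    have hw_r : t ^ 2 * w ^ 2 / 8 ≤ (r ^ 2 / 4) * t ^ 2 / 2 := by
      have h4 : w ^ 2 ≤ r ^ 2 := by nlinarith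
      have h5 : t ^ 2 * w ^ 2 ≤ t ^ 2 * r ^ 2 := mul_le_mul_of_nonneg_left h4 (sq_nonneg t)
      have h6 : (r ^ 2 / 4) * t ^ 2 / 2 = t ^ 2 * r ^ 2 / 8 := by ring
      rw [h6]
      exact (div_le_div_iff_of_pos_right (by norm_num : (0:ℝ) < 8)).mpr h5
    show unifE (fun x => Real.exp (t * (g x - m))) ≤ _
    unfold unifE
    rw [div_le_iff₀ hN]
    calc ∑ i, Real.exp (t * (g i - m)) ≤ N * (((b - m) * Real.exp (t * (a - m)) - (a - m) * Real.exp (t * (b - m))) / w) := sum_le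
      _ ≤ N * Real.exp (t ^ 2 * w ^ 2 / 8) := by
          apply mul_le_mul_of_nonneg_left hkey (le_of_lt hN)
      _ ≤ N * Real.exp ((r ^ 2 / 4) * t ^ 2 / 2) := by
          apply mul_le_mul_of_nonneg_left (Real.exp_le_exp.mpr hw_r) (le_of_lt hN)
      _ = Real.exp ((r ^ 2 / 4) * t ^ 2 / 2) * N := mul_comm _ _

lemma unifE_const_one {α : Type*} [Fintype α] [Nonempty α] : unifE (fun _ : α => (1:ℝ)) = 1 := by
  unfold unifE
  have : (0:ℝ) < Fintype.card α := by exact_mod_cast Fintype.card_pos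
  simp [div_self (ne_of_gt this)]

lemma step_lemma {ι β : Type*} [Fintype ι] [Nonempty ι] [Fintype β] [Nonempty β]
    (F : ι → β → ℝ) (c c' : ℝ)
    (h1 : ∀ i, IsSubgConst (F i) c)
    (h2 : IsSubgConst (fun i => unifE (F i)) c') :
    IsSubgConst (fun x : ι × β => F x.1 x.2) (c + c') := by
  intro t
  have hNι : (0:ℝ) < Fintype.card ι := by exact_mod_cast Fintype.card_pos
  have hNβ : (0:ℝ) < Fintype.card β := by exact_mod_cast Fintype.card_pos
  have hM : unifE (fun x : ι × β => F x.1 x.2) = unifE (fun i => unifE (F i)) := by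
    unfold unifE
    rw [Fintype.sum_prod_type, Fintype.card_prod, ← Finset.sum_div, div_div]
    push_cast
    ring
  set g : ι → ℝ := fun i => unifE (F i) with hg
  set M : ℝ := unifE g with hMdef
  rw [hM]
  unfold unifE
  rw [div_le_iff₀ (by rw [Fintype.card_prod]; push_cast; positivity)]
  have inner : ∀ i, ∑ e, Real.exp (t * (F i e - g i)) ≤
      (Fintype.card β : ℝ) * Real.exp (c * t ^ 2 / 2) := by
    intro i
    have := h1 i t
    unfold unifE at this
    rw [div_le_iff₀ hNβ] at this
    calc ∑ e, Real.exp (t * (F i e - g i)) ≤ Real.exp (c * t ^ 2 / 2) * (Fintype.card β : ℝ) := this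
      _ = (Fintype.card β : ℝ) * Real.exp (c * t ^ 2 / 2) := mul_comm _ _
  have outer : ∑ i, Real.exp (t * (g i - M)) ≤
      (Fintype.card ι : ℝ) * Real.exp (c' * t ^ 2 / 2) := by
    have := h2 t
    unfold unifE at this
    rw [div_le_iff₀ hNι] at this
    calc ∑ i, Real.exp (t * (g i - M)) ≤ Real.exp (c' * t ^ 2 / 2) * (Fintype.card ι : ℝ) := this
      _ = _ := mul_comm _ _
  calc ∑ x : ι × β, Real.exp (t * (F x.1 x.2 - M))
      = ∑ i, ∑ e, Real.exp (t * (F i e - g i)) * Real.exp (t * (g i - M)) := by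
        rw [Fintype.sum_prod_type]
        apply Finset.sum_congr rfl; intro i _
        apply Finset.sum_congr rfl; intro e _
        rw [← Real.exp_add]; congr 1; ring
    _ = ∑ i, (∑ e, Real.exp (t * (F i e - g i))) * Real.exp (t * (g i - M)) := by
        apply Finset.sum_congr rfl; intro i _
        rw [Finset.sum_mul]
    _ ≤ ∑ i, ((Fintype.card β : ℝ) * Real.exp (c * t ^ 2 / 2)) * Real.exp (t * (g i - M)) := by
        apply Finset.sum_le_sum; intro i _
        exact mul_le_mul_of_nonneg_right (inner i) (le_of_lt (Real.exp_pos _))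
    _ = ((Fintype.card β : ℝ) * Real.exp (c * t ^ 2 / 2)) * ∑ i, Real.exp (t * (g i - M)) := by
        rw [← Finset.mul_sum]
    _ ≤ ((Fintype.card β : ℝ) * Real.exp (c * t ^ 2 / 2)) *
        ((Fintype.card ι : ℝ) * Real.exp (c' * t ^ 2 / 2)) := by
        apply mul_le_mul_of_nonneg_left outer
        positivity
    _ = Real.exp ((c + c') * t ^ 2 / 2) * ↑(Fintype.card (ι × β)) := by
        rw [Fintype.card_prod]
        push_cast
        rw [show (c + c') * t ^ 2 / 2 = c * t ^ 2 / 2 + c' * t ^ 2 / 2 by ring, Real.exp_add]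
        ring

lemma transfer_lemma {α γ : Type*} [Fintype α] [Fintype γ] (e : α ≃ γ) (f : γ → ℝ) (c : ℝ)
    (h : IsSubgConst f c) : IsSubgConst (fun a => f (e a)) c := by
  have hcard : (Fintype.card α : ℝ) = Fintype.card γ := by
    exact_mod_cast Fintype.card_congr e
  have hu : ∀ F : γ → ℝ, unifE (fun a => F (e a)) = unifE F := by
    intro F
    unfold unifE
    rw [Equiv.sum_comp e F, hcard]
  intro t
  rw [hu]
  have := h t
  rw [← hu (fun x => Real.exp (t * (f x - unifE f)))] at this
  exact this

lemma subg_const_fn {α : Type*} [Fintype α] [Nonempty α] (f : α → ℝ)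
    (hconst : ∀ x y, f x = f y) : IsSubgConst f 0 := by
  have x0 : α := Classical.arbitrary α
  have hN : (0:ℝ) < Fintype.card α := by exact_mod_cast Fintype.card_pos
  have hE : unifE f = f x0 := by
    unfold unifE
    rw [div_eq_iff (ne_of_gt hN)]
    calc (∑ x, f x) = ∑ _x : α, f x0 := Finset.sum_congr rfl fun x _ => hconst x x0
      _ = f x0 * (Fintype.card α : ℝ) := by simp [mul_comm]
  intro t
  have : (fun x => Real.exp (t * (f x - unifE f))) = fun _ : α => 1 := by
    funext x
    rw [hE, hconst x x0]
    simp
  rw [this, unifE_const_one]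
  simp

lemma distA {n : ℕ} (p : Fin (n+1)) (e e' : Equiv.Perm (Fin n)) :
    permHammingDist (Equiv.Perm.decomposeFin.symm (p, e)) (Equiv.Perm.decomposeFin.symm (p, e'))
      = permHammingDist e e' := by
  unfold permHammingDist
  rw [Finset.card_filter, Finset.card_filter, Fin.sum_univ_succ]
  simp only [Equiv.Perm.decomposeFin_symm_apply_zero, Equiv.Perm.decomposeFin_symm_apply_succ,
    ne_eq, EmbeddingLike.apply_eq_iff_eq, Fin.succ_inj]
  simp

lemma distB {n : ℕ} (p p' : Fin n) (σ : Equiv.Perm (Fin n)) :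
    permHammingDist σ (Equiv.swap p p' * σ) ≤ 2 := by
  unfold permHammingDist
  have hsub : (univ.filter fun i => σ i ≠ (Equiv.swap p p' * σ) i)
      ⊆ {σ⁻¹ p, σ⁻¹ p'} := by
    intro i hi
    rw [Finset.mem_filter] at hi
    simp only [Equiv.Perm.mul_apply, ne_eq] at hi
    have hor : σ i = p ∨ σ i = p' := by
      by_contra hcon
      push_neg at hcon
      exact hi.2 (Equiv.swap_apply_of_ne_of_ne hcon.1 hcon.2).symm
    simp only [Finset.mem_insert, Finset.mem_singleton]
    rcases hor with h | h
    · left; rw [← h]; simp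
    · right; rw [← h]; simp
  calc (univ.filter fun i => σ i ≠ (Equiv.swap p p' * σ) i).card
      ≤ ({σ⁻¹ p, σ⁻¹ p'} : Finset (Fin n)).card := Finset.card_le_card hsub
    _ ≤ 2 := (Finset.card_insert_le _ _).trans (by simp)

lemma coupling {n : ℕ} (p p' : Fin (n+1)) (f : Equiv.Perm (Fin (n+1)) → ℝ) :
    ∑ e : Equiv.Perm (Fin n), f (Equiv.Perm.decomposeFin.symm (p', e))
      = ∑ e : Equiv.Perm (Fin n),
          f (Equiv.swap p p' * Equiv.Perm.decomposeFin.symm (p, e)) := by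
  set Φ : Equiv.Perm (Fin n) → Equiv.Perm (Fin n) :=
    fun e => (Equiv.Perm.decomposeFin (Equiv.swap p p' * Equiv.Perm.decomposeFin.symm (p, e))).2
    with hΦ
  have key : ∀ e, Equiv.Perm.decomposeFin.symm (p', Φ e)
      = Equiv.swap p p' * Equiv.Perm.decomposeFin.symm (p, e) := by
    intro e
    set τ := Equiv.swap p p' * Equiv.Perm.decomposeFin.symm (p, e) with hτ
    have hτ0 : τ 0 = p' := by
      rw [hτ]
      simp [Equiv.Perm.mul_apply, Equiv.Perm.decomposeFin_symm_apply_zero]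
    have hfst : (Equiv.Perm.decomposeFin τ).1 = τ 0 := by
      conv_rhs => rw [← Equiv.Perm.decomposeFin.symm_apply_apply τ]
      rw [show (Equiv.Perm.decomposeFin τ) = ((Equiv.Perm.decomposeFin τ).1,
        (Equiv.Perm.decomposeFin τ).2) from rfl]
      rw [Equiv.Perm.decomposeFin_symm_apply_zero]
    have : (p', Φ e) = Equiv.Perm.decomposeFin τ := by
      rw [hΦ]
      ext
      · simp [hfst, hτ0]
      · rfl
    rw [this, Equiv.Perm.decomposeFin.symm_apply_apply]
  have hinj : Function.Injective Φ := by
    intro e e' hee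
    have h1 : Equiv.Perm.decomposeFin.symm (p', Φ e) = Equiv.Perm.decomposeFin.symm (p', Φ e') := by
      rw [hee]
    rw [key e, key e'] at h1
    have h2 : Equiv.Perm.decomposeFin.symm (p, e) = Equiv.Perm.decomposeFin.symm (p, e') :=
      mul_left_cancel h1
    have h3 : ((p, e) : Fin (n+1) × Equiv.Perm (Fin n)) = (p, e') :=
      Equiv.Perm.decomposeFin.symm.injective h2
    exact (Prod.ext_iff.mp h3).2
  have hbij : Function.Bijective Φ := Finite.injective_iff_bijective.mp hinj
  calc ∑ e, f (Equiv.Perm.decomposeFin.symm (p', e))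
      = ∑ e, f (Equiv.Perm.decomposeFin.symm (p', Φ e)) :=
        (hbij.sum_comp fun e => f (Equiv.Perm.decomposeFin.symm (p', e))).symm
    _ = ∑ e, f (Equiv.swap p p' * Equiv.Perm.decomposeFin.symm (p, e)) := by
        apply Finset.sum_congr rfl
        intro e _
        rw [key e]

lemma main_lemma : ∀ n : ℕ, ∀ f : Equiv.Perm (Fin (n+1)) → ℝ,
    IsLip permHammingDist f → IsSubgConst f n := by
  intro n
  induction n with
  | zero =>
    intro f hf
    have : IsSubgConst f 0 := by
      apply subg_const_fn
      intro x y
      haveI : Subsingleton (Equiv.Perm (Fin (0+1))) :=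
        ⟨fun a b => Equiv.ext fun i => by
          have h1 : a i = 0 := Fin.fin_one_eq_zero _
          have h2 : b i = 0 := Fin.fin_one_eq_zero _
          rw [h1, h2]⟩
      exact congrArg f (Subsingleton.elim x y)
    simpa using this
  | succ n IH =>
    intro f hf
    set F : Fin (n+2) → Equiv.Perm (Fin (n+1)) → ℝ :=
      fun p e => f (Equiv.Perm.decomposeFin.symm (p, e)) with hF
    have h1 : ∀ p, IsSubgConst (F p) n := by
      intro p
      apply IH
      intro e e'
      rw [hF]
      calc |f (Equiv.Perm.decomposeFin.symm (p, e)) - f (Equiv.Perm.decomposeFin.symm (p, e'))|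
          ≤ (permHammingDist (Equiv.Perm.decomposeFin.symm (p, e))
              (Equiv.Perm.decomposeFin.symm (p, e')) : ℝ) := hf _ _
        _ = (permHammingDist e e' : ℝ) := by rw [distA]
    have hN : (0:ℝ) < Fintype.card (Equiv.Perm (Fin (n+1))) := by
      exact_mod_cast Fintype.card_pos
    have h2lip : ∀ p p' : Fin (n+2), |unifE (F p) - unifE (F p')| ≤ 2 := by
      intro p p'
      have habs : ∀ e : Equiv.Perm (Fin (n+1)),
          |F p e - f (Equiv.swap p p' * Equiv.Perm.decomposeFin.symm (p, e))| ≤ 2 := by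
        intro e
        calc |F p e - f (Equiv.swap p p' * Equiv.Perm.decomposeFin.symm (p, e))|
            ≤ (permHammingDist (Equiv.Perm.decomposeFin.symm (p, e))
                (Equiv.swap p p' * Equiv.Perm.decomposeFin.symm (p, e)) : ℝ) := hf _ _
          _ ≤ 2 := by exact_mod_cast distB p p' _
      have hcoup : unifE (F p') = unifE (fun e =>
          f (Equiv.swap p p' * Equiv.Perm.decomposeFin.symm (p, e))) := by
        unfold unifE
        simp only [hF]
        rw [coupling p p' f]
      rw [hcoup]
      unfold unifE
      rw [div_sub_div_same, ← Finset.sum_sub_distrib]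
      rw [abs_div, abs_of_pos hN, div_le_iff₀ hN]
      calc |∑ e, (F p e - f (Equiv.swap p p' * Equiv.Perm.decomposeFin.symm (p, e)))|
          ≤ ∑ e, |F p e - f (Equiv.swap p p' * Equiv.Perm.decomposeFin.symm (p, e))| :=
            Finset.abs_sum_le_sum_abs _ _
        _ ≤ ∑ _e : Equiv.Perm (Fin (n+1)), (2:ℝ) := Finset.sum_le_sum fun e _ => habs e
        _ = 2 * Fintype.card (Equiv.Perm (Fin (n+1))) := by simp [mul_comm]
    have h2 : IsSubgConst (fun p => unifE (F p)) 1 := by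
      have := hoeffding_unif (fun p => unifE (F p)) 2 h2lip
      norm_num at this
      exact this
    have hstep := step_lemma F (n : ℝ) 1 h1 h2
    have htrans := transfer_lemma Equiv.Perm.decomposeFin (fun x => F x.1 x.2) ((n : ℝ) + 1) hstep
    have hfeq : (fun a => (fun x : Fin (n+2) × Equiv.Perm (Fin (n+1)) => F x.1 x.2)
        (Equiv.Perm.decomposeFin a)) = f := by
      funext a
      show F (Equiv.Perm.decomposeFin a).1 (Equiv.Perm.decomposeFin a).2 = f a
      rw [hF]
      show f (Equiv.Perm.decomposeFin.symm ((Equiv.Perm.decomposeFin a).1,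
        (Equiv.Perm.decomposeFin a).2)) = f a
      congr 1
      rw [show ((Equiv.Perm.decomposeFin a).1, (Equiv.Perm.decomposeFin a).2)
        = Equiv.Perm.decomposeFin a from rfl]
      exact Equiv.Perm.decomposeFin.symm_apply_apply a
    rw [hfeq] at htrans
    have : ((n + 1 : ℕ) : ℝ) = (n : ℝ) + 1 := by push_cast; ring
    rw [this]
    exact htrans

lemma subg_nonneg {α : Type*} [Fintype α] [Nonempty α] (f : α → ℝ) (c : ℝ)
    (h : IsSubgConst f c) : 0 ≤ c := by
  by_contra hneg
  push_neg at hneg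
  have hN : (0:ℝ) < Fintype.card α := by exact_mod_cast Fintype.card_pos
  have h1 := h 1
  have hge : (1:ℝ) ≤ unifE (fun x => Real.exp (1 * (f x - unifE f))) := by
    have hpt : ∀ x, 1 + (f x - unifE f) ≤ Real.exp (1 * (f x - unifE f)) := by
      intro x
      rw [one_mul]
      linarith [Real.add_one_le_exp (f x - unifE f)]
    have hsum : (Fintype.card α : ℝ) ≤ ∑ x, Real.exp (1 * (f x - unifE f)) := by
      calc (Fintype.card α : ℝ) = ∑ x, (1 + (f x - unifE f)) := by
            rw [Finset.sum_add_distrib, Finset.sum_sub_distrib]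
            simp only [Finset.sum_const, Finset.card_univ, nsmul_eq_mul, mul_one]
            unfold unifE
            field_simp
            ring
        _ ≤ ∑ x, Real.exp (1 * (f x - unifE f)) := Finset.sum_le_sum fun x _ => hpt x
    have hrfl : unifE (fun x => Real.exp (1 * (f x - unifE f)))
        = (∑ x, Real.exp (1 * (f x - unifE f))) / (Fintype.card α) := rfl
    rw [hrfl, le_div_iff₀ hN]
    linarith
  have hlt : Real.exp (c * 1 ^ 2 / 2) < 1 := by
    rw [show c * 1 ^ 2 / 2 = c / 2 by ring]
    rw [Real.exp_lt_one_iff]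
    linarith
  linarith

theorem sgConst_symmetricGroup_le (n : ℕ) (hn : 1 ≤ n) :
    sgConst (permHammingDist (n := n)) ≤ (n : ℝ) - 1 := by
  have hn1 : (1:ℝ) ≤ (n:ℝ) := by exact_mod_cast hn
  apply Real.sSup_le _ (by linarith)
  rintro s ⟨f, hlip, rfl⟩
  obtain ⟨m, rfl⟩ : ∃ m, n = m + 1 := ⟨n - 1, by omega⟩
  have hmem : ((m:ℝ)) ∈ {c | IsSubgConst f c} := main_lemma m f hlip
  have hbdd : BddBelow {c | IsSubgConst f c} :=
    ⟨0, fun c hc => subg_nonneg f c hc⟩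
  have hle := csInf_le hbdd hmem
  have hcast : ((m:ℝ)) = ((m + 1 : ℕ) : ℝ) - 1 := by push_cast; ring
  linarith
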